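/- There exist three bricks in R^d (for every d ≥ 2) and a box Q tileable by translates of these three bricks, such that no hyperplane cut splits Q into two boxes each tileable by translates of a proper subset of the three brick types. (The 2-dimensional example 1×R, R×1, (R-1)×(R-1) tiling the (R+1)×(R+1) square, extended by side lengths 1 in extra coordinates, works.) -/

import Mathlib

open MeasureTheory


/-- `Brick d c` is the axis-aligned box `∏_j (0, c j)` in `ℝ^d`. -/
def Brick (d : ℕ) (c : Fin d → ℝ) : Set (EuclideanSpace ℝ (Fin d)) :=
  {x | ∀ j, x j ∈ Set.Ioo 0 (c j)}

/-- `TriTiles d c1 c2 c3 S` : the region `S` can be tiled by finitely many translates of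
the three bricks with dimensions `c1`, `c2`, `c3`. -/
def TriTiles (d : ℕ) (c1 c2 c3 : Fin d → ℝ) (S : Set (EuclideanSpace ℝ (Fin d))) : Prop :=
  ∃ Λ1 Λ2 Λ3 : Finset (EuclideanSpace ℝ (Fin d)),
    ∀ᵐ x : EuclideanSpace ℝ (Fin d),
      (∑ l ∈ Λ1, (Brick d c1).indicator (fun _ => (1 : ℝ)) (x - l)) +
      (∑ l ∈ Λ2, (Brick d c2).indicator (fun _ => (1 : ℝ)) (x - l)) +
      (∑ l ∈ Λ3, (Brick d c3).indicator (fun _ => (1 : ℝ)) (x - l)) =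
      S.indicator (fun _ => (1 : ℝ)) x

/-- `TriTilesProper` : the region `S` can be tiled as in `TriTiles`, but using only a
proper subset of the three brick types (at least one type is not used at all). -/
def TriTilesProper (d : ℕ) (c1 c2 c3 : Fin d → ℝ) (S : Set (EuclideanSpace ℝ (Fin d))) :
    Prop :=
  ∃ Λ1 Λ2 Λ3 : Finset (EuclideanSpace ℝ (Fin d)),
    (Λ1 = ∅ ∨ Λ2 = ∅ ∨ Λ3 = ∅) ∧
    ∀ᵐ x : EuclideanSpace ℝ (Fin d),
      (∑ l ∈ Λ1, (Brick d c1).indicator (fun _ => (1 : ℝ)) (x - l)) +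
      (∑ l ∈ Λ2, (Brick d c2).indicator (fun _ => (1 : ℝ)) (x - l)) +
      (∑ l ∈ Λ3, (Brick d c3).indicator (fun _ => (1 : ℝ)) (x - l)) =
      S.indicator (fun _ => (1 : ℝ)) x

namespace BMAux

open Real Set

/-- linear independence of 1, π over ℚ -/
lemma rat_pi {a b : ℤ} (h : (a : ℝ) + b * Real.pi = 0) : a = 0 ∧ b = 0 := by
  have hb : b = 0 := by
    by_contra hb
    have hbR : (b : ℝ) ≠ 0 := Int.cast_ne_zero.2 hb
    refine irrational_pi ⟨(-a : ℚ) / (b : ℚ), ?_⟩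
    push_cast
    field_simp
    linarith
  subst hb
  have : (a : ℝ) = 0 := by simpa using h
  exact ⟨by exact_mod_cast this, rfl⟩

lemma comb1 {s : ℝ} (hs : 0 < s) (h1 : ∃ n : ℤ, s = n * 1)
    (h2 : ∃ m : ℤ, s = m * (Real.pi + 1)) : False := by
  obtain ⟨n, hn⟩ := h1
  obtain ⟨m, hm⟩ := h2
  have h : ((n - m : ℤ) : ℝ) + (-m : ℤ) * Real.pi = 0 := by push_cast; nlinarith
  obtain ⟨h3, h4⟩ := rat_pi h
  have : n = 0 := by omega
  rw [this] at hn; norm_num at hn; linarith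

lemma comb2 {s : ℝ} (hs : 0 < s) (h1 : ∃ n : ℤ, s = n * 1)
    (h2 : ∃ m : ℤ, s = m * Real.pi) : False := by
  obtain ⟨n, hn⟩ := h1
  obtain ⟨m, hm⟩ := h2
  have h : ((n : ℤ) : ℝ) + (-m : ℤ) * Real.pi = 0 := by push_cast; nlinarith
  obtain ⟨h3, h4⟩ := rat_pi h
  rw [h3] at hn; norm_num at hn; linarith

lemma comb3 {s : ℝ} (hs : 0 < s) (h1 : ∃ n : ℤ, s = n * Real.pi)
    (h2 : ∃ m : ℤ, s = m * (Real.pi + 1)) : False := by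
  obtain ⟨n, hn⟩ := h1
  obtain ⟨m, hm⟩ := h2
  have h : ((-m : ℤ) : ℝ) + (n - m : ℤ) * Real.pi = 0 := by push_cast; nlinarith
  obtain ⟨h3, h4⟩ := rat_pi h
  have hm0 : m = 0 := by omega
  have hn0 : n = 0 := by omega
  rw [hn0] at hn; norm_num at hn; linarith

lemma F1 : ¬ ∃ n : ℤ, (Real.pi + 2 : ℝ) = n * 1 := by
  rintro ⟨n, hn⟩
  have h : ((2 - n : ℤ) : ℝ) + (1 : ℤ) * Real.pi = 0 := by push_cast; nlinarith
  obtain ⟨-, h4⟩ := rat_pi h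
  exact one_ne_zero h4

lemma F2 : ¬ ∃ n : ℤ, (Real.pi + 2 : ℝ) = n * Real.pi := by
  rintro ⟨n, hn⟩
  have h : ((2 : ℤ) : ℝ) + (1 - n : ℤ) * Real.pi = 0 := by push_cast; nlinarith
  obtain ⟨h3, -⟩ := rat_pi h
  omega

lemma F3 : ¬ ∃ n : ℤ, (Real.pi + 2 : ℝ) = n * (Real.pi + 1) := by
  rintro ⟨n, hn⟩
  have h : ((2 - n : ℤ) : ℝ) + (1 - n : ℤ) * Real.pi = 0 := by push_cast; nlinarith
  obtain ⟨h3, h4⟩ := rat_pi h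
  omega

/-- the one-dimensional weight function -/
noncomputable def wt : Option ℝ → ℝ → ℂ
  | some u => fun t => Complex.exp ((2 * Real.pi * Complex.I / u) * t)
  | none => (Set.Ioo (0:ℝ) (Real.pi + 3)).indicator (fun _ => 1)

lemma wt_ind_integrable (K : Option ℝ) (a' b' : ℝ) :
    Integrable ((Set.Ioo a' b').indicator (wt K)) := by
  rw [integrable_indicator_iff measurableSet_Ioo]
  match K with
  | some u =>
      have hc : Continuous fun t : ℝ => Complex.exp ((2 * Real.pi * Complex.I / u) * t) := by
        fun_prop
      exact (hc.integrableOn_Icc (a := a') (b := b')).mono_set Set.Ioo_subset_Icc_self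
  | none =>
      have h1 : IntegrableOn (fun _ : ℝ => (1 : ℂ)) (Set.Ioo a' b') := by
        refine integrableOn_const ?_
        exact measure_Ioo_lt_top.ne
      exact h1.indicator measurableSet_Ioo

lemma k_ne_zero {u : ℝ} (hu : u ≠ 0) : (2 * Real.pi * Complex.I / u : ℂ) ≠ 0 := by
  apply div_ne_zero
  · simpa [Complex.ext_iff] using Complex.two_pi_I_ne_zero
  · exact_mod_cast hu

lemma C1 {u : ℝ} (hu : u ≠ 0) {a' b' : ℝ} (h : a' ≤ b') :
    ∫ t, (Set.Ioo a' b').indicator (wt (some u)) t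
      = (Complex.exp ((2 * Real.pi * Complex.I / u) * b')
          - Complex.exp ((2 * Real.pi * Complex.I / u) * a')) / (2 * Real.pi * Complex.I / u) := by
  rw [integral_indicator measurableSet_Ioo, ← MeasureTheory.integral_Ioc_eq_integral_Ioo,
    ← intervalIntegral.integral_of_le h]
  exact integral_exp_mul_complex (k_ne_zero hu)

lemma C1iff {u : ℝ} (hu : u ≠ 0) {a' b' : ℝ} (h : a' ≤ b') :
    (∫ t, (Set.Ioo a' b').indicator (wt (some u)) t) = 0 ↔ ∃ n : ℤ, b' - a' = n * u := by
  rw [C1 hu h]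
  set k : ℂ := 2 * Real.pi * Complex.I / u with hk
  have hkne : k ≠ 0 := k_ne_zero hu
  have hu' : (u : ℂ) ≠ 0 := by exact_mod_cast hu
  have h2pi : (2 * (Real.pi : ℂ) * Complex.I) ≠ 0 := by
    simpa [Complex.ext_iff] using Complex.two_pi_I_ne_zero
  have hsplit : Complex.exp (k * b') = Complex.exp (k * a') * Complex.exp (k * (b' - a' : ℝ)) := by
    rw [← Complex.exp_add]
    congr 1
    push_cast
    ring
  rw [hsplit, div_eq_zero_iff]
  constructor
  · rintro (h0 | h0)
    · have hfac : Complex.exp (k * a') * (Complex.exp (k * (b' - a' : ℝ)) - 1) = 0 := by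
        linear_combination h0
      rcases mul_eq_zero.1 hfac with h1 | h1
      · exact absurd h1 (Complex.exp_ne_zero _)
      · have h1' : Complex.exp (k * (b' - a' : ℝ)) = 1 := by linear_combination h1
        rw [Complex.exp_eq_one_iff] at h1'
        obtain ⟨n, hn⟩ := h1'
        refine ⟨n, ?_⟩
        rw [hk, div_mul_eq_mul_div, div_eq_iff hu'] at hn
        have hgoal : (2 * (Real.pi : ℂ) * Complex.I) * ((b' - a' : ℝ) : ℂ)
            = (2 * (Real.pi : ℂ) * Complex.I) * ((n : ℂ) * u) := by
          rw [hn]; ring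
        have := mul_left_cancel₀ h2pi hgoal
        exact_mod_cast this
    · exact absurd h0 hkne
  · rintro ⟨n, hn⟩
    left
    have hone : Complex.exp (k * (b' - a' : ℝ)) = 1 := by
      rw [hn]
      push_cast
      rw [hk]
      have heq : 2 * (Real.pi : ℂ) * Complex.I / u * ((n : ℂ) * u)
          = (n : ℂ) * (2 * Real.pi * Complex.I) := by
        field_simp
      rw [heq]
      exact Complex.exp_int_mul_two_pi_mul_I n
    rw [hone, mul_one, sub_self]

lemma C2 {a' b' : ℝ} (h0 : 0 ≤ a') (h1 : b' ≤ Real.pi + 3) (h : a' ≤ b') :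
    ∫ t, (Set.Ioo a' b').indicator (wt none) t = ((b' - a' : ℝ) : ℂ) := by
  have heq : (Set.Ioo a' b').indicator (wt none) = (Set.Ioo a' b').indicator (fun _ => (1:ℂ)) := by
    funext t
    by_cases ht : t ∈ Set.Ioo a' b'
    · rw [Set.indicator_of_mem ht, Set.indicator_of_mem ht, wt]
      have : t ∈ Set.Ioo (0:ℝ) (Real.pi + 3) := ⟨by cases ht; linarith, by cases ht; linarith⟩
      rw [Set.indicator_of_mem this]
    · rw [Set.indicator_of_notMem ht, Set.indicator_of_notMem ht]
  rw [heq, integral_indicator_const (1 : ℂ) measurableSet_Ioo]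
  rw [Real.volume_real_Ioo_of_le h]
  rw [Complex.real_smul, mul_one]


section Key

variable {d : ℕ}

lemma sub_apply (x l : EuclideanSpace ℝ (Fin d)) (j : Fin d) : (x - l) j = x j - l j := rfl

lemma integral_prod_box (g : Fin d → ℝ → ℂ) :
    ∫ x : EuclideanSpace ℝ (Fin d), ∏ j, g j (x j) = ∏ j, ∫ t, g j t := by
  rw [← ((EuclideanSpace.volume_preserving_symm_measurableEquiv_toLp (Fin d)).symm).integral_comp'
      (fun x : EuclideanSpace ℝ (Fin d) => ∏ j, g j (x j))]
  have heq : ∀ y : Fin d → ℝ,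
      (∏ j, g j (((MeasurableEquiv.toLp 2 (Fin d → ℝ)).symm.symm y) j)) = ∏ j, g j (y j) := by
    intro y
    rfl
  simp_rw [heq]
  exact MeasureTheory.integral_fintype_prod_eq_prod g

lemma integrable_prod_box (g : Fin d → ℝ → ℂ) (hg : ∀ j, Integrable (g j)) :
    Integrable (fun x : EuclideanSpace ℝ (Fin d) => ∏ j, g j (x j)) := by
  rw [← ((EuclideanSpace.volume_preserving_symm_measurableEquiv_toLp (Fin d)).symm).integrable_comp_emb
      (MeasurableEquiv.measurableEmbedding _)]
  exact MeasureTheory.Integrable.fintype_prod hg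

lemma key (K : Fin d → Option ℝ) (hK : ∀ j u, K j = some u → u ≠ 0)
    (aa bb : Fin d → ℝ) (hab : ∀ j, aa j < bb j)
    (hsub : ∀ j, K j = none → 0 ≤ aa j ∧ bb j ≤ Real.pi + 3)
    (c1 c2 c3 : Fin d → ℝ) (hc1 : ∀ j, 0 < c1 j) (hc2 : ∀ j, 0 < c2 j) (hc3 : ∀ j, 0 < c3 j)
    (Λ1 Λ2 Λ3 : Finset (EuclideanSpace ℝ (Fin d)))
    (k1 : Λ1 = ∅ ∨ ∃ p u, K p = some u ∧ ∃ n : ℤ, c1 p = n * u)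
    (k2 : Λ2 = ∅ ∨ ∃ p u, K p = some u ∧ ∃ n : ℤ, c2 p = n * u)
    (k3 : Λ3 = ∅ ∨ ∃ p u, K p = some u ∧ ∃ n : ℤ, c3 p = n * u)
    (H : ∀ᵐ x : EuclideanSpace ℝ (Fin d),
      (∑ l ∈ Λ1, (Brick d c1).indicator (fun _ => (1 : ℝ)) (x - l)) +
      (∑ l ∈ Λ2, (Brick d c2).indicator (fun _ => (1 : ℝ)) (x - l)) +
      (∑ l ∈ Λ3, (Brick d c3).indicator (fun _ => (1 : ℝ)) (x - l)) =
      ({y : EuclideanSpace ℝ (Fin d) | ∀ j, y j ∈ Set.Ioo (aa j) (bb j)}).indicator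
        (fun _ => (1 : ℝ)) x) :
    ∃ p u, K p = some u ∧ ∃ n : ℤ, bb p - aa p = n * u := by
  by_contra hcon
  push_neg at hcon
  -- pointwise factorization of weighted box indicators
  have h_fact : ∀ (lo hi : Fin d → ℝ) (x : EuclideanSpace ℝ (Fin d)),
      (∏ j, wt (K j) (x j)) *
        ((({y : EuclideanSpace ℝ (Fin d) | ∀ j, y j ∈ Set.Ioo (lo j) (hi j)}).indicator
          (fun _ => (1 : ℝ)) x : ℝ) : ℂ)
      = ∏ j, (Set.Ioo (lo j) (hi j)).indicator (wt (K j)) (x j) := by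
    intro lo hi x
    by_cases hm : ∀ j, x j ∈ Set.Ioo (lo j) (hi j)
    · rw [Set.indicator_of_mem
        (show x ∈ {y : EuclideanSpace ℝ (Fin d) | ∀ j, y j ∈ Set.Ioo (lo j) (hi j)} from hm)]
      push_cast
      rw [mul_one]
      exact Finset.prod_congr rfl fun j _ => (Set.indicator_of_mem (hm j) _).symm
    · rw [Set.indicator_of_notMem
        (show x ∉ {y : EuclideanSpace ℝ (Fin d) | ∀ j, y j ∈ Set.Ioo (lo j) (hi j)} from hm)]
      push_neg at hm
      obtain ⟨j, hj⟩ := hm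
      push_cast
      rw [mul_zero]
      exact (Finset.prod_eq_zero (Finset.mem_univ j) (Set.indicator_of_notMem hj _)).symm
  -- brick indicators are box indicators
  have h_brick : ∀ (c : Fin d → ℝ) (l : EuclideanSpace ℝ (Fin d))
      (x : EuclideanSpace ℝ (Fin d)),
      (Brick d c).indicator (fun _ => (1 : ℝ)) (x - l) =
      ({y : EuclideanSpace ℝ (Fin d) | ∀ j, y j ∈ Set.Ioo (l j) (l j + c j)}).indicator
        (fun _ => (1 : ℝ)) x := by
    intro c l x
    have hiff : ((x - l) ∈ Brick d c) ↔ ∀ j, x j ∈ Set.Ioo (l j) (l j + c j) := by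
      constructor
      · intro h j
        have := h j
        rw [sub_apply] at this
        exact ⟨by have := this.1; linarith, by have := this.2; linarith⟩
      · intro h j
        rw [sub_apply]
        exact ⟨by have := (h j).1; linarith, by have := (h j).2; linarith⟩
    by_cases hm : ∀ j, x j ∈ Set.Ioo (l j) (l j + c j)
    · rw [Set.indicator_of_mem (hiff.2 hm), Set.indicator_of_mem
        (show x ∈ {y : EuclideanSpace ℝ (Fin d) | ∀ j, y j ∈ Set.Ioo (l j) (l j + c j)} from hm)]
    · rw [Set.indicator_of_notMem (fun h => hm (hiff.1 h)), Set.indicator_of_notMem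
        (show x ∉ {y : EuclideanSpace ℝ (Fin d) | ∀ j, y j ∈ Set.Ioo (l j) (l j + c j)} from hm)]
  have hterm : ∀ (c : Fin d → ℝ) (l : EuclideanSpace ℝ (Fin d))
      (x : EuclideanSpace ℝ (Fin d)),
      (∏ j, wt (K j) (x j)) * (((Brick d c).indicator (fun _ => (1 : ℝ)) (x - l) : ℝ) : ℂ)
      = ∏ j, (Set.Ioo (l j) (l j + c j)).indicator (wt (K j)) (x j) := by
    intro c l x
    rw [h_brick]
    exact h_fact _ _ x
  have h_intE : ∀ (lo hi : Fin d → ℝ),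
      Integrable (fun x : EuclideanSpace ℝ (Fin d) =>
        ∏ j, (Set.Ioo (lo j) (hi j)).indicator (wt (K j)) (x j)) := by
    intro lo hi
    exact integrable_prod_box _ fun j => wt_ind_integrable (K j) _ _
  -- the weighted integral identity
  have hI : (∫ x : EuclideanSpace ℝ (Fin d), (∏ j, wt (K j) (x j)) *
        ((((∑ l ∈ Λ1, (Brick d c1).indicator (fun _ => (1 : ℝ)) (x - l)) +
          (∑ l ∈ Λ2, (Brick d c2).indicator (fun _ => (1 : ℝ)) (x - l)) +
          (∑ l ∈ Λ3, (Brick d c3).indicator (fun _ => (1 : ℝ)) (x - l)) : ℝ)) : ℂ))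
      = ∫ x : EuclideanSpace ℝ (Fin d), (∏ j, wt (K j) (x j)) *
        ((({y : EuclideanSpace ℝ (Fin d) | ∀ j, y j ∈ Set.Ioo (aa j) (bb j)}).indicator
          (fun _ => (1 : ℝ)) x : ℝ) : ℂ) := by
    apply integral_congr_ae
    filter_upwards [H] with x hx
    rw [hx]
  -- compute the right-hand side as a nonzero product
  have hRHSval : (∫ x : EuclideanSpace ℝ (Fin d), (∏ j, wt (K j) (x j)) *
        ((({y : EuclideanSpace ℝ (Fin d) | ∀ j, y j ∈ Set.Ioo (aa j) (bb j)}).indicator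
          (fun _ => (1 : ℝ)) x : ℝ) : ℂ))
      = ∏ j, ∫ t, (Set.Ioo (aa j) (bb j)).indicator (wt (K j)) t := by
    have : (fun x : EuclideanSpace ℝ (Fin d) => (∏ j, wt (K j) (x j)) *
        ((({y : EuclideanSpace ℝ (Fin d) | ∀ j, y j ∈ Set.Ioo (aa j) (bb j)}).indicator
          (fun _ => (1 : ℝ)) x : ℝ) : ℂ))
        = fun x => ∏ j, (Set.Ioo (aa j) (bb j)).indicator (wt (K j)) (x j) := by
      funext x
      exact h_fact aa bb x
    rw [this]
    exact integral_prod_box _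
  have hRHSne : (∏ j, ∫ t, (Set.Ioo (aa j) (bb j)).indicator (wt (K j)) t) ≠ 0 := by
    rw [Finset.prod_ne_zero_iff]
    intro j _
    cases hKj : K j with
    | none =>
        rw [C2 (hsub j hKj).1 (hsub j hKj).2 (hab j).le]
        exact_mod_cast sub_ne_zero.2 (ne_of_gt (hab j))
    | some u =>
        intro h0
        obtain ⟨n, hn⟩ := (C1iff (hK j u hKj) (hab j).le).1 h0
        exact hcon j u hKj n hn
  -- compute the left-hand side as zero
  have hLfun : (fun x : EuclideanSpace ℝ (Fin d) => (∏ j, wt (K j) (x j)) *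
        ((((∑ l ∈ Λ1, (Brick d c1).indicator (fun _ => (1 : ℝ)) (x - l)) +
          (∑ l ∈ Λ2, (Brick d c2).indicator (fun _ => (1 : ℝ)) (x - l)) +
          (∑ l ∈ Λ3, (Brick d c3).indicator (fun _ => (1 : ℝ)) (x - l)) : ℝ)) : ℂ))
      = fun x =>
        (∑ l ∈ Λ1, ∏ j, (Set.Ioo (l j) (l j + c1 j)).indicator (wt (K j)) (x j)) +
        (∑ l ∈ Λ2, ∏ j, (Set.Ioo (l j) (l j + c2 j)).indicator (wt (K j)) (x j)) +
        (∑ l ∈ Λ3, ∏ j, (Set.Ioo (l j) (l j + c3 j)).indicator (wt (K j)) (x j)) := by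
    funext x
    push_cast
    rw [mul_add, mul_add, Finset.mul_sum, Finset.mul_sum, Finset.mul_sum]
    congr 1
    · congr 1
      · exact Finset.sum_congr rfl fun l _ => hterm c1 l x
      · exact Finset.sum_congr rfl fun l _ => hterm c2 l x
    · exact Finset.sum_congr rfl fun l _ => hterm c3 l x
  have hz : ∀ (c : Fin d → ℝ), (∀ j, 0 < c j) →
      (∃ p u, K p = some u ∧ ∃ n : ℤ, c p = n * u) →
      ∀ l : EuclideanSpace ℝ (Fin d),
        (∏ j, ∫ t, (Set.Ioo (l j) (l j + c j)).indicator (wt (K j)) t) = 0 := by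
    rintro c hc ⟨p, u, hKp, n, hn⟩ l
    apply Finset.prod_eq_zero (Finset.mem_univ p)
    rw [hKp]
    apply (C1iff (hK p u hKp) (by linarith [hc p])).2
    exact ⟨n, by rw [← hn]; ring⟩
  have hLHSzero : (∫ x : EuclideanSpace ℝ (Fin d), (∏ j, wt (K j) (x j)) *
        ((((∑ l ∈ Λ1, (Brick d c1).indicator (fun _ => (1 : ℝ)) (x - l)) +
          (∑ l ∈ Λ2, (Brick d c2).indicator (fun _ => (1 : ℝ)) (x - l)) +
          (∑ l ∈ Λ3, (Brick d c3).indicator (fun _ => (1 : ℝ)) (x - l)) : ℝ)) : ℂ)) = 0 := by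
    rw [hLfun]
    have hA : Integrable (fun x : EuclideanSpace ℝ (Fin d) =>
        ∑ l ∈ Λ1, ∏ j, (Set.Ioo (l j) (l j + c1 j)).indicator (wt (K j)) (x j)) :=
      integrable_finset_sum _ fun l _ => h_intE _ _
    have hB : Integrable (fun x : EuclideanSpace ℝ (Fin d) =>
        ∑ l ∈ Λ2, ∏ j, (Set.Ioo (l j) (l j + c2 j)).indicator (wt (K j)) (x j)) :=
      integrable_finset_sum _ fun l _ => h_intE _ _
    have hC : Integrable (fun x : EuclideanSpace ℝ (Fin d) =>
        ∑ l ∈ Λ3, ∏ j, (Set.Ioo (l j) (l j + c3 j)).indicator (wt (K j)) (x j)) :=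
      integrable_finset_sum _ fun l _ => h_intE _ _
    have hAB : Integrable (fun x : EuclideanSpace ℝ (Fin d) =>
        (∑ l ∈ Λ1, ∏ j, (Set.Ioo (l j) (l j + c1 j)).indicator (wt (K j)) (x j)) +
        (∑ l ∈ Λ2, ∏ j, (Set.Ioo (l j) (l j + c2 j)).indicator (wt (K j)) (x j))) := by
      exact hA.add hB
    rw [integral_add hAB hC, integral_add hA hB,
      integral_finset_sum _ (fun l _ => h_intE _ _),
      integral_finset_sum _ (fun l _ => h_intE _ _),
      integral_finset_sum _ (fun l _ => h_intE _ _)]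
    have hsum : ∀ (c : Fin d → ℝ), (∀ j, 0 < c j) →
        ∀ (Λ : Finset (EuclideanSpace ℝ (Fin d))),
        (Λ = ∅ ∨ ∃ p u, K p = some u ∧ ∃ n : ℤ, c p = n * u) →
        (∑ l ∈ Λ, ∫ x : EuclideanSpace ℝ (Fin d),
          ∏ j, (Set.Ioo (l j) (l j + c j)).indicator (wt (K j)) (x j)) = 0 := by
      rintro c hc Λ (rfl | hkill)
      · exact Finset.sum_empty
      · apply Finset.sum_eq_zero
        intro l _
        rw [integral_prod_box]
        exact hz c hc hkill l
    rw [hsum c1 hc1 Λ1 k1, hsum c2 hc2 Λ2 k2, hsum c3 hc3 Λ3 k3]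
    norm_num
  rw [hLHSzero, hRHSval] at hI
  exact hRHSne hI.symm

end Key


lemma key2 {d : ℕ} (p p' : Fin d) (hne : p ≠ p') (u v : ℝ) (hu : u ≠ 0) (hv : v ≠ 0)
    (aa bb : Fin d → ℝ) (hab : ∀ j, aa j < bb j)
    (hsub : ∀ j, j ≠ p → j ≠ p' → 0 ≤ aa j ∧ bb j ≤ Real.pi + 3)
    (c1 c2 c3 : Fin d → ℝ) (hc1 : ∀ j, 0 < c1 j) (hc2 : ∀ j, 0 < c2 j) (hc3 : ∀ j, 0 < c3 j)
    (Λ1 Λ2 Λ3 : Finset (EuclideanSpace ℝ (Fin d)))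
    (k1 : Λ1 = ∅ ∨ (∃ n : ℤ, c1 p = n * u) ∨ (∃ n : ℤ, c1 p' = n * v))
    (k2 : Λ2 = ∅ ∨ (∃ n : ℤ, c2 p = n * u) ∨ (∃ n : ℤ, c2 p' = n * v))
    (k3 : Λ3 = ∅ ∨ (∃ n : ℤ, c3 p = n * u) ∨ (∃ n : ℤ, c3 p' = n * v))
    (H : ∀ᵐ x : EuclideanSpace ℝ (Fin d),
      (∑ l ∈ Λ1, (Brick d c1).indicator (fun _ => (1 : ℝ)) (x - l)) +
      (∑ l ∈ Λ2, (Brick d c2).indicator (fun _ => (1 : ℝ)) (x - l)) +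
      (∑ l ∈ Λ3, (Brick d c3).indicator (fun _ => (1 : ℝ)) (x - l)) =
      ({y : EuclideanSpace ℝ (Fin d) | ∀ j, y j ∈ Set.Ioo (aa j) (bb j)}).indicator
        (fun _ => (1 : ℝ)) x) :
    (∃ n : ℤ, bb p - aa p = n * u) ∨ (∃ n : ℤ, bb p' - aa p' = n * v) := by
  classical
  set K : Fin d → Option ℝ :=
    fun j => if j = p then some u else if j = p' then some v else none with hKdef
  have hKp : K p = some u := by simp [hKdef]
  have hKp' : K p' = some v := by simp [hKdef, hne.symm]
  have hKnone : ∀ j, j ≠ p → j ≠ p' → K j = none := by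
    intro j h1 h2; simp [hKdef, h1, h2]
  have hK : ∀ j w, K j = some w → w ≠ 0 := by
    intro j w hjw
    by_cases h1 : j = p
    · subst h1; rw [hKp] at hjw; rw [← Option.some_inj.1 hjw]; exact hu
    by_cases h2 : j = p'
    · subst h2; rw [hKp'] at hjw; rw [← Option.some_inj.1 hjw]; exact hv
    · rw [hKnone j h1 h2] at hjw; exact absurd hjw (by simp)
  have hsub' : ∀ j, K j = none → 0 ≤ aa j ∧ bb j ≤ Real.pi + 3 := by
    intro j hj
    by_cases h1 : j = p
    · subst h1; rw [hKp] at hj; exact absurd hj (by simp)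
    by_cases h2 : j = p'
    · subst h2; rw [hKp'] at hj; exact absurd hj (by simp)
    · exact hsub j h1 h2
  have conv : ∀ (c : Fin d → ℝ),
      ((∃ n : ℤ, c p = n * u) ∨ (∃ n : ℤ, c p' = n * v)) →
      ∃ pp uu, K pp = some uu ∧ ∃ n : ℤ, c pp = n * uu := by
    rintro c (⟨n, hn⟩ | ⟨n, hn⟩)
    · exact ⟨p, u, hKp, n, hn⟩
    · exact ⟨p', v, hKp', n, hn⟩
  have hres := key K hK aa bb hab hsub' c1 c2 c3 hc1 hc2 hc3 Λ1 Λ2 Λ3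
    (k1.imp id (conv c1)) (k2.imp id (conv c2)) (k3.imp id (conv c3)) H
  obtain ⟨q, w, hKq, n, hn⟩ := hres
  by_cases h1 : q = p
  · subst h1
    rw [hKp] at hKq
    exact Or.inl ⟨n, by rw [hn, Option.some_inj.1 hKq]⟩
  by_cases h2 : q = p'
  · subst h2
    rw [hKp'] at hKq
    exact Or.inr ⟨n, by rw [hn, Option.some_inj.1 hKq]⟩
  · rw [hKnone q h1 h2] at hKq; exact absurd hKq (by simp)

lemma key1 {d : ℕ} (p : Fin d) (u : ℝ) (hu : u ≠ 0)
    (aa bb : Fin d → ℝ) (hab : ∀ j, aa j < bb j)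
    (hsub : ∀ j, j ≠ p → 0 ≤ aa j ∧ bb j ≤ Real.pi + 3)
    (c1 c2 c3 : Fin d → ℝ) (hc1 : ∀ j, 0 < c1 j) (hc2 : ∀ j, 0 < c2 j) (hc3 : ∀ j, 0 < c3 j)
    (Λ1 Λ2 Λ3 : Finset (EuclideanSpace ℝ (Fin d)))
    (k1 : ∃ n : ℤ, c1 p = n * u) (k2 : ∃ n : ℤ, c2 p = n * u) (k3 : ∃ n : ℤ, c3 p = n * u)
    (H : ∀ᵐ x : EuclideanSpace ℝ (Fin d),
      (∑ l ∈ Λ1, (Brick d c1).indicator (fun _ => (1 : ℝ)) (x - l)) +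
      (∑ l ∈ Λ2, (Brick d c2).indicator (fun _ => (1 : ℝ)) (x - l)) +
      (∑ l ∈ Λ3, (Brick d c3).indicator (fun _ => (1 : ℝ)) (x - l)) =
      ({y : EuclideanSpace ℝ (Fin d) | ∀ j, y j ∈ Set.Ioo (aa j) (bb j)}).indicator
        (fun _ => (1 : ℝ)) x) :
    ∃ n : ℤ, bb p - aa p = n * u := by
  classical
  set K : Fin d → Option ℝ := fun j => if j = p then some u else none with hKdef
  have hKp : K p = some u := by simp [hKdef]
  have hKnone : ∀ j, j ≠ p → K j = none := by intro j h1; simp [hKdef, h1]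
  have hK : ∀ j w, K j = some w → w ≠ 0 := by
    intro j w hjw
    by_cases h1 : j = p
    · subst h1; rw [hKp] at hjw; rw [← Option.some_inj.1 hjw]; exact hu
    · rw [hKnone j h1] at hjw; exact absurd hjw (by simp)
  have hsub' : ∀ j, K j = none → 0 ≤ aa j ∧ bb j ≤ Real.pi + 3 := by
    intro j hj
    by_cases h1 : j = p
    · subst h1; rw [hKp] at hj; exact absurd hj (by simp)
    · exact hsub j h1
  have hres := key K hK aa bb hab hsub' c1 c2 c3 hc1 hc2 hc3 Λ1 Λ2 Λ3
    (Or.inr ⟨p, u, hKp, k1⟩) (Or.inr ⟨p, u, hKp, k2⟩) (Or.inr ⟨p, u, hKp, k3⟩) H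
  obtain ⟨q, w, hKq, n, hn⟩ := hres
  by_cases h1 : q = p
  · subst h1
    rw [hKp] at hKq
    exact ⟨n, by rw [hn, Option.some_inj.1 hKq]⟩
  · rw [hKnone q h1] at hKq; exact absurd hKq (by simp)

section Geom

variable {d : ℕ}

def pp0 (d : ℕ) (hd : 2 ≤ d) : Fin d := ⟨0, by omega⟩
def pp1 (d : ℕ) (hd : 2 ≤ d) : Fin d := ⟨1, by omega⟩

lemma pp_ne (hd : 2 ≤ d) : pp0 d hd ≠ pp1 d hd := by
  intro h
  have := congrArg (fun z : Fin d => (z : ℕ)) h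
  simp [pp0, pp1] at this

noncomputable def dims (d : ℕ) (c0 c1 : ℝ) : Fin d → ℝ :=
  fun j => if (j : ℕ) = 0 then c0 else if (j : ℕ) = 1 then c1 else 1

noncomputable def vec (d : ℕ) (l0 l1 : ℝ) : EuclideanSpace ℝ (Fin d) :=
  WithLp.toLp 2 (fun j : Fin d => if (j : ℕ) = 0 then l0 else if (j : ℕ) = 1 then l1 else 0)

lemma dims_p0 (hd : 2 ≤ d) (c0 c1 : ℝ) : dims d c0 c1 (pp0 d hd) = c0 := by
  simp [dims, pp0]

lemma dims_p1 (hd : 2 ≤ d) (c0 c1 : ℝ) : dims d c0 c1 (pp1 d hd) = c1 := by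
  simp [dims, pp1]

lemma dims_hi (c0 c1 : ℝ) (j : Fin d) (h : 2 ≤ (j : ℕ)) : dims d c0 c1 j = 1 := by
  rw [dims, if_neg (by omega), if_neg (by omega)]

lemma vec_p0 (hd : 2 ≤ d) (l0 l1 : ℝ) : vec d l0 l1 (pp0 d hd) = l0 := by
  simp [vec, pp0]

lemma vec_p1 (hd : 2 ≤ d) (l0 l1 : ℝ) : vec d l0 l1 (pp1 d hd) = l1 := by
  simp [vec, pp1]

lemma vec_hi (l0 l1 : ℝ) (j : Fin d) (h : 2 ≤ (j : ℕ)) : vec d l0 l1 j = 0 := by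
  rw [vec, PiLp.toLp_apply, if_neg (by omega), if_neg (by omega)]

lemma dims_pos {c0 c1 : ℝ} (h0 : 0 < c0) (h1 : 0 < c1) : ∀ j : Fin d, 0 < dims d c0 c1 j := by
  intro j
  rw [dims]
  split_ifs <;> norm_num <;> assumption

lemma coord_cases (hd : 2 ≤ d) (j : Fin d) : j = pp0 d hd ∨ j = pp1 d hd ∨ 2 ≤ (j : ℕ) := by
  by_cases h0 : (j : ℕ) = 0
  · exact Or.inl (Fin.ext h0)
  by_cases h1 : (j : ℕ) = 1
  · exact Or.inr (Or.inl (Fin.ext h1))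
  · exact Or.inr (Or.inr (by omega))

lemma ae_ne (d : ℕ) (j : Fin d) (v : ℝ) : ∀ᵐ x : EuclideanSpace ℝ (Fin d), x j ≠ v := by
  have hpi : (volume : Measure (Fin d → ℝ)) {y | y j = v} = 0 := by
    rw [volume_pi]
    exact Measure.pi_hyperplane (fun _ => (volume : Measure ℝ)) j v
  have hmeas : MeasurableSet {y : Fin d → ℝ | y j = v} := by
    have h : {y : Fin d → ℝ | y j = v} = (fun y : Fin d → ℝ => y j) ⁻¹' {v} := rfl
    rw [h]
    exact (measurable_pi_apply j) (measurableSet_singleton v)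
  have h0 : volume {x : EuclideanSpace ℝ (Fin d) | x j = v} = 0 := by
    have := (EuclideanSpace.volume_preserving_symm_measurableEquiv_toLp (Fin d)).measure_preimage
      hmeas.nullMeasurableSet
    rw [← hpi, ← this]
    rfl
  rw [ae_iff]
  simp only [ne_eq, not_not]
  exact h0

end Geom


section Tiling

variable {d : ℕ}

lemma vec_zero : vec d 0 0 = 0 := by
  ext j
  rw [vec, PiLp.toLp_apply]
  split_ifs <;> rfl

lemma zones (w : ℝ) (h0 : w ≠ 0) (h1 : w ≠ 1) (hR : w ≠ Real.pi + 1) (hR1 : w ≠ Real.pi + 2) :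
    w < 0 ∨ (0 < w ∧ w < 1) ∨ (1 < w ∧ w < Real.pi + 1) ∨
      (Real.pi + 1 < w ∧ w < Real.pi + 2) ∨ Real.pi + 2 < w := by
  rcases h0.lt_or_gt with h | h
  · exact Or.inl h
  rcases h1.lt_or_gt with h' | h'
  · exact Or.inr (Or.inl ⟨h, h'⟩)
  rcases hR.lt_or_gt with h'' | h''
  · exact Or.inr (Or.inr (Or.inl ⟨h', h''⟩))
  rcases hR1.lt_or_gt with h3 | h3
  · exact Or.inr (Or.inr (Or.inr (Or.inl ⟨h'', h3⟩)))
  · exact Or.inr (Or.inr (Or.inr (Or.inr h3)))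

lemma ind_eval (hd : 2 ≤ d) (l0 l1 c0 c1' : ℝ) (x : EuclideanSpace ℝ (Fin d))
    (hrest : ∀ j : Fin d, 2 ≤ (j : ℕ) → 0 < x j ∧ x j < 1) :
    (Brick d (dims d c0 c1')).indicator (fun _ => (1 : ℝ)) (x - vec d l0 l1) =
    if l0 < x (pp0 d hd) ∧ x (pp0 d hd) < l0 + c0 ∧ l1 < x (pp1 d hd) ∧ x (pp1 d hd) < l1 + c1'
    then 1 else 0 := by
  by_cases h : l0 < x (pp0 d hd) ∧ x (pp0 d hd) < l0 + c0 ∧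
      l1 < x (pp1 d hd) ∧ x (pp1 d hd) < l1 + c1'
  · rw [if_pos h]
    obtain ⟨h1, h2, h3, h4⟩ := h
    have hmem : x - vec d l0 l1 ∈ Brick d (dims d c0 c1') := by
      intro j
      rw [sub_apply]
      rcases coord_cases hd j with rfl | rfl | hj
      · rw [vec_p0, dims_p0]
        exact ⟨by linarith, by linarith⟩
      · rw [vec_p1, dims_p1]
        exact ⟨by linarith, by linarith⟩
      · rw [vec_hi _ _ _ hj, dims_hi _ _ _ hj]
        have := hrest j hj
        exact ⟨by linarith [this.1], by linarith [this.2]⟩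
    exact Set.indicator_of_mem hmem _
  · rw [if_neg h]
    apply Set.indicator_of_notMem
    intro hmem
    apply h
    have h0 := hmem (pp0 d hd)
    have h1 := hmem (pp1 d hd)
    rw [sub_apply, vec_p0, dims_p0] at h0
    rw [sub_apply, vec_p1, dims_p1] at h1
    exact ⟨by linarith [h0.1], by linarith [h0.2], by linarith [h1.1], by linarith [h1.2]⟩

set_option maxHeartbeats 2000000 in
lemma tiles (hd : 2 ≤ d) :
    TriTiles d (dims d 1 (Real.pi + 1)) (dims d (Real.pi + 1) 1) (dims d Real.pi Real.pi)
      {x : EuclideanSpace ℝ (Fin d) | ∀ j, x j ∈ Set.Ioo 0 (dims d (Real.pi + 2) (Real.pi + 2) j)} := by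
  classical
  refine ⟨{vec d 0 0, vec d (Real.pi + 1) 1}, {vec d 1 0, vec d 0 (Real.pi + 1)},
    {vec d 1 1}, ?_⟩
  have hp : 3 < Real.pi := Real.pi_gt_three
  have hne1 : vec d 0 0 ≠ vec d (Real.pi + 1) 1 := by
    intro h
    have := congrArg (fun f : EuclideanSpace ℝ (Fin d) => f (pp0 d hd)) h
    simp only [vec_p0] at this
    linarith
  have hne2 : vec d 1 0 ≠ vec d 0 (Real.pi + 1) := by
    intro h
    have := congrArg (fun f : EuclideanSpace ℝ (Fin d) => f (pp0 d hd)) h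
    simp only [vec_p0] at this
    linarith
  have hae : ∀ᵐ x : EuclideanSpace ℝ (Fin d), ∀ j : Fin d,
      x j ≠ 0 ∧ x j ≠ 1 ∧ x j ≠ Real.pi + 1 ∧ x j ≠ Real.pi + 2 :=
    MeasureTheory.ae_all_iff.2 fun j =>
      ((ae_ne d j 0).and ((ae_ne d j 1).and ((ae_ne d j (Real.pi + 1)).and
        (ae_ne d j (Real.pi + 2)))))
  filter_upwards [hae] with x hx
  rw [Finset.sum_pair hne1, Finset.sum_pair hne2, Finset.sum_singleton]
  have hQrw : ({x : EuclideanSpace ℝ (Fin d) |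
        ∀ j, x j ∈ Set.Ioo 0 (dims d (Real.pi + 2) (Real.pi + 2) j)}).indicator
      (fun _ => (1 : ℝ)) x
      = (Brick d (dims d (Real.pi + 2) (Real.pi + 2))).indicator (fun _ => (1 : ℝ))
        (x - vec d 0 0) := by
    rw [vec_zero, sub_zero]
    rfl
  by_cases hrest : ∀ j : Fin d, 2 ≤ (j : ℕ) → 0 < x j ∧ x j < 1
  · rw [hQrw, ind_eval hd 0 0 1 (Real.pi + 1) x hrest,
      ind_eval hd (Real.pi + 1) 1 1 (Real.pi + 1) x hrest,
      ind_eval hd 1 0 (Real.pi + 1) 1 x hrest,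
      ind_eval hd 0 (Real.pi + 1) (Real.pi + 1) 1 x hrest,
      ind_eval hd 1 1 Real.pi Real.pi x hrest,
      ind_eval hd 0 0 (Real.pi + 2) (Real.pi + 2) x hrest]
    obtain ⟨hu0, hu1, huR, huR1⟩ := hx (pp0 d hd)
    obtain ⟨hv0, hv1, hvR, hvR1⟩ := hx (pp1 d hd)
    by_cases h1 : 0 < x (pp0 d hd) ∧ x (pp0 d hd) < 0 + 1 ∧
        0 < x (pp1 d hd) ∧ x (pp1 d hd) < 0 + (Real.pi + 1) <;>
    by_cases h2 : Real.pi + 1 < x (pp0 d hd) ∧ x (pp0 d hd) < Real.pi + 1 + 1 ∧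
        1 < x (pp1 d hd) ∧ x (pp1 d hd) < 1 + (Real.pi + 1) <;>
    by_cases h3 : 1 < x (pp0 d hd) ∧ x (pp0 d hd) < 1 + (Real.pi + 1) ∧
        0 < x (pp1 d hd) ∧ x (pp1 d hd) < 0 + 1 <;>
    by_cases h4 : 0 < x (pp0 d hd) ∧ x (pp0 d hd) < 0 + (Real.pi + 1) ∧
        Real.pi + 1 < x (pp1 d hd) ∧ x (pp1 d hd) < Real.pi + 1 + 1 <;>
    by_cases h5 : 1 < x (pp0 d hd) ∧ x (pp0 d hd) < 1 + Real.pi ∧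
        1 < x (pp1 d hd) ∧ x (pp1 d hd) < 1 + Real.pi <;>
    by_cases h6 : 0 < x (pp0 d hd) ∧ x (pp0 d hd) < 0 + (Real.pi + 2) ∧
        0 < x (pp1 d hd) ∧ x (pp1 d hd) < 0 + (Real.pi + 2) <;>
    (first | rw [if_pos h1] | rw [if_neg h1]) <;>
    (first | rw [if_pos h2] | rw [if_neg h2]) <;>
    (first | rw [if_pos h3] | rw [if_neg h3]) <;>
    (first | rw [if_pos h4] | rw [if_neg h4]) <;>
    (first | rw [if_pos h5] | rw [if_neg h5]) <;>
    (first | rw [if_pos h6] | rw [if_neg h6]) <;>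
    (first | norm_num | exfalso)
    all_goals try have a1 := h1.1
    all_goals try have a2 := h1.2.1
    all_goals try have a3 := h1.2.2.1
    all_goals try have a4 := h1.2.2.2
    all_goals try have b1 := h2.1
    all_goals try have b2 := h2.2.1
    all_goals try have b3 := h2.2.2.1
    all_goals try have b4 := h2.2.2.2
    all_goals try have c1 := h3.1
    all_goals try have c2 := h3.2.1
    all_goals try have c3 := h3.2.2.1
    all_goals try have c4 := h3.2.2.2
    all_goals try have d1 := h4.1
    all_goals try have d2 := h4.2.1
    all_goals try have d3 := h4.2.2.1
    all_goals try have d4 := h4.2.2.2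
    all_goals try have e1 := h5.1
    all_goals try have e2 := h5.2.1
    all_goals try have e3 := h5.2.2.1
    all_goals try have e4 := h5.2.2.2
    all_goals try have f1 := h6.1
    all_goals try have f2 := h6.2.1
    all_goals try have f3 := h6.2.2.1
    all_goals try have f4 := h6.2.2.2
    all_goals
      first
      | linarith
      | exact h6 ⟨by linarith, by linarith, by linarith, by linarith⟩
      | (rcases zones (x (pp0 d hd)) hu0 hu1 huR huR1 with
            hu | ⟨hua, hub⟩ | ⟨hua, hub⟩ | ⟨hua, hub⟩ | hu <;>
         rcases zones (x (pp1 d hd)) hv0 hv1 hvR hvR1 with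
            hv | ⟨hva, hvb⟩ | ⟨hva, hvb⟩ | ⟨hva, hvb⟩ | hv <;>
         first
         | linarith
         | exact h1 ⟨by linarith, by linarith, by linarith, by linarith⟩
         | exact h2 ⟨by linarith, by linarith, by linarith, by linarith⟩
         | exact h3 ⟨by linarith, by linarith, by linarith, by linarith⟩
         | exact h4 ⟨by linarith, by linarith, by linarith, by linarith⟩
         | exact h5 ⟨by linarith, by linarith, by linarith, by linarith⟩)
  · push_neg at hrest
    obtain ⟨j, hj2, hjbad⟩ := hrest
    have hz : ∀ l0 l1 c0 c1' : ℝ,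
        (Brick d (dims d c0 c1')).indicator (fun _ => (1 : ℝ)) (x - vec d l0 l1) = 0 := by
      intro l0 l1 c0 c1'
      apply Set.indicator_of_notMem
      intro hmem
      have := hmem j
      rw [sub_apply, vec_hi _ _ _ hj2, dims_hi _ _ _ hj2, sub_zero] at this
      exact absurd this.2 (not_lt.2 (hjbad this.1))
    rw [hQrw, hz, hz, hz, hz, hz, hz]
    norm_num

end Tiling


lemma finish6 (e0 e1 : ℝ) (he0 : 0 < e0) (he1 : 0 < e1)
    (h01 : e0 = Real.pi + 2 ∨ e1 = Real.pi + 2)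
    (u1 v1 u2 v2 : ℝ)
    (hQ1 : ¬∃ n : ℤ, (Real.pi + 2 : ℝ) = n * u1)
    (hQ2 : ¬∃ n : ℤ, (Real.pi + 2 : ℝ) = n * v1)
    (hQ3 : ¬∃ n : ℤ, (Real.pi + 2 : ℝ) = n * u2)
    (hQ4 : ¬∃ n : ℤ, (Real.pi + 2 : ℝ) = n * v2)
    (hU : ∀ s : ℝ, 0 < s → (∃ n : ℤ, s = n * u1) → (∃ m : ℤ, s = m * u2) → False)
    (hV : ∀ s : ℝ, 0 < s → (∃ n : ℤ, s = n * v1) → (∃ m : ℤ, s = m * v2) → False)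
    (d1 : (∃ n : ℤ, e0 = n * u1) ∨ (∃ n : ℤ, e1 = n * v1))
    (d2 : (∃ n : ℤ, e0 = n * u2) ∨ (∃ n : ℤ, e1 = n * v2)) : False := by
  rcases h01 with h | h
  · rcases d1 with hd1 | hd1
    · exact hQ1 (by rwa [h] at hd1)
    · rcases d2 with hd2 | hd2
      · exact hQ3 (by rwa [h] at hd2)
      · exact hV e1 he1 hd1 hd2
  · rcases d1 with hd1 | hd1
    · rcases d2 with hd2 | hd2
      · exact hU e0 he0 hd1 hd2
      · exact hQ4 (by rwa [h] at hd2)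
    · exact hQ2 (by rwa [h] at hd1)

lemma attack {d : ℕ} (hd : 2 ≤ d) (aa bb : Fin d → ℝ)
    (hab : ∀ i, aa i < bb i)
    (hbnd : ∀ i, 0 ≤ aa i ∧ bb i ≤ Real.pi + 3)
    (h01 : bb (pp0 d hd) - aa (pp0 d hd) = Real.pi + 2 ∨
           bb (pp1 d hd) - aa (pp1 d hd) = Real.pi + 2)
    (hprop : TriTilesProper d (dims d 1 (Real.pi + 1)) (dims d (Real.pi + 1) 1)
      (dims d Real.pi Real.pi)
      {y : EuclideanSpace ℝ (Fin d) | ∀ i, y i ∈ Set.Ioo (aa i) (bb i)}) : False := by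
  obtain ⟨Λ1, Λ2, Λ3, hemp, H⟩ := hprop
  have hp : 3 < Real.pi := Real.pi_gt_three
  have hπ : Real.pi ≠ 0 := Real.pi_ne_zero
  have hπ1 : Real.pi + 1 ≠ 0 := by positivity
  have hc1 : ∀ i, 0 < dims d 1 (Real.pi + 1) i := dims_pos one_pos (by linarith)
  have hc2 : ∀ i, 0 < dims d (Real.pi + 1) 1 i := dims_pos (by linarith) one_pos
  have hc3 : ∀ i, 0 < dims d Real.pi Real.pi i := dims_pos (by linarith) (by linarith)
  have hsub' : ∀ i, i ≠ pp0 d hd → i ≠ pp1 d hd → 0 ≤ aa i ∧ bb i ≤ Real.pi + 3 :=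
    fun i _ _ => hbnd i
  have he0 : 0 < bb (pp0 d hd) - aa (pp0 d hd) := sub_pos.2 (hab _)
  have he1 : 0 < bb (pp1 d hd) - aa (pp1 d hd) := sub_pos.2 (hab _)
  rcases hemp with h1e | h2e | h3e
  · -- Λ1 = ∅ : weights (π, 1) and (π+1, π)
    have d1 := key2 (pp0 d hd) (pp1 d hd) (pp_ne hd) Real.pi 1 hπ one_ne_zero
      aa bb hab hsub' _ _ _ hc1 hc2 hc3 Λ1 Λ2 Λ3
      (Or.inl h1e)
      (Or.inr (Or.inr ⟨1, by rw [dims_p1]; norm_num⟩))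
      (Or.inr (Or.inl ⟨1, by rw [dims_p0]; norm_num⟩)) H
    have d2 := key2 (pp0 d hd) (pp1 d hd) (pp_ne hd) (Real.pi + 1) Real.pi hπ1 hπ
      aa bb hab hsub' _ _ _ hc1 hc2 hc3 Λ1 Λ2 Λ3
      (Or.inl h1e)
      (Or.inr (Or.inl ⟨1, by rw [dims_p0]; norm_num⟩))
      (Or.inr (Or.inr ⟨1, by rw [dims_p1]; norm_num⟩)) H
    exact finish6 _ _ he0 he1 h01 _ _ _ _ F2 F1 F3 F2
      (fun s hs ha hb => comb3 hs ha hb) (fun s hs ha hb => comb2 hs ha hb) d1 d2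
  · -- Λ2 = ∅ : weights (1, π) and (π, π+1)
    have d1 := key2 (pp0 d hd) (pp1 d hd) (pp_ne hd) 1 Real.pi one_ne_zero hπ
      aa bb hab hsub' _ _ _ hc1 hc2 hc3 Λ1 Λ2 Λ3
      (Or.inr (Or.inl ⟨1, by rw [dims_p0]; norm_num⟩))
      (Or.inl h2e)
      (Or.inr (Or.inr ⟨1, by rw [dims_p1]; norm_num⟩)) H
    have d2 := key2 (pp0 d hd) (pp1 d hd) (pp_ne hd) Real.pi (Real.pi + 1) hπ hπ1
      aa bb hab hsub' _ _ _ hc1 hc2 hc3 Λ1 Λ2 Λ3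
      (Or.inr (Or.inr ⟨1, by rw [dims_p1]; norm_num⟩))
      (Or.inl h2e)
      (Or.inr (Or.inl ⟨1, by rw [dims_p0]; norm_num⟩)) H
    exact finish6 _ _ he0 he1 h01 _ _ _ _ F1 F2 F2 F3
      (fun s hs ha hb => comb2 hs ha hb) (fun s hs ha hb => comb3 hs ha hb) d1 d2
  · -- Λ3 = ∅ : weights (1, 1) and (π+1, π+1)
    have d1 := key2 (pp0 d hd) (pp1 d hd) (pp_ne hd) 1 1 one_ne_zero one_ne_zero
      aa bb hab hsub' _ _ _ hc1 hc2 hc3 Λ1 Λ2 Λ3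
      (Or.inr (Or.inl ⟨1, by rw [dims_p0]; norm_num⟩))
      (Or.inr (Or.inr ⟨1, by rw [dims_p1]; norm_num⟩))
      (Or.inl h3e) H
    have d2 := key2 (pp0 d hd) (pp1 d hd) (pp_ne hd) (Real.pi + 1) (Real.pi + 1) hπ1 hπ1
      aa bb hab hsub' _ _ _ hc1 hc2 hc3 Λ1 Λ2 Λ3
      (Or.inr (Or.inr ⟨1, by rw [dims_p1]; norm_num⟩))
      (Or.inr (Or.inl ⟨1, by rw [dims_p0]; norm_num⟩))
      (Or.inl h3e) H
    exact finish6 _ _ he0 he1 h01 _ _ _ _ F1 F1 F3 F3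
      (fun s hs ha hb => comb1 hs ha hb) (fun s hs ha hb => comb1 hs ha hb) d1 d2

lemma lower_eq {d : ℕ} (q : Fin d → ℝ) (j : Fin d) (α : ℝ) [DecidableEq (Fin d)] :
    {x : EuclideanSpace ℝ (Fin d) | (∀ i, x i ∈ Set.Ioo 0 (q i)) ∧ x j < α} =
    {y : EuclideanSpace ℝ (Fin d) | ∀ i, y i ∈ Set.Ioo ((fun _ => (0 : ℝ)) i)
      ((fun i => if i = j then min (q j) α else q i) i)} := by
  ext x
  simp only [Set.mem_setOf_eq, Set.mem_Ioo]
  constructor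
  · rintro ⟨h, hj⟩ i
    by_cases hij : i = j
    · subst hij
      refine ⟨(h i).1, ?_⟩
      rw [if_pos rfl]
      exact lt_min (h i).2 hj
    · rw [if_neg hij]
      exact h i
  · intro h
    constructor
    · intro i
      have hi := h i
      by_cases hij : i = j
      · subst hij
        rw [if_pos rfl] at hi
        exact ⟨hi.1, lt_of_lt_of_le hi.2 (min_le_left _ _)⟩
      · rw [if_neg hij] at hi
        exact hi
    · have hj := h j
      rw [if_pos rfl] at hj
      exact lt_of_lt_of_le hj.2 (min_le_right _ _)

lemma upper_eq {d : ℕ} (q : Fin d → ℝ) (j : Fin d) (α : ℝ) [DecidableEq (Fin d)] :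
    {x : EuclideanSpace ℝ (Fin d) | (∀ i, x i ∈ Set.Ioo 0 (q i)) ∧ α < x j} =
    {y : EuclideanSpace ℝ (Fin d) | ∀ i, y i ∈ Set.Ioo
      ((fun i => if i = j then max 0 α else (0 : ℝ)) i) ((fun i => q i) i)} := by
  ext x
  simp only [Set.mem_setOf_eq, Set.mem_Ioo]
  constructor
  · rintro ⟨h, hj⟩ i
    by_cases hij : i = j
    · subst hij
      rw [if_pos rfl]
      exact ⟨max_lt (h i).1 hj, (h i).2⟩
    · rw [if_neg hij]
      exact h i
  · intro h
    constructor
    · intro i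
      have hi := h i
      by_cases hij : i = j
      · subst hij
        rw [if_pos rfl] at hi
        exact ⟨lt_of_le_of_lt (le_max_left _ _) hi.1, hi.2⟩
      · rw [if_neg hij] at hi
        exact hi
    · have hj := h j
      rw [if_pos rfl] at hj
      exact lt_of_le_of_lt (le_max_right _ _) hj.1

end BMAux

open BMAux in
/-- In every dimension `d ≥ 2` there are three bricks and a box `Q` tileable by their
translates, such that no hyperplane cut `x j = α` splits `Q` into two boxes each tileable
by translates of a proper subset of the three brick types. -/
theorem no_bower_michael_for_three_bricks (d : ℕ) (hd : 2 ≤ d) :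
    ∃ c1 c2 c3 q : Fin d → ℝ,
      (∀ j, 0 < c1 j) ∧ (∀ j, 0 < c2 j) ∧ (∀ j, 0 < c3 j) ∧ (∀ j, 0 < q j) ∧
      TriTiles d c1 c2 c3 {x : EuclideanSpace ℝ (Fin d) | ∀ j, x j ∈ Set.Ioo 0 (q j)} ∧
      ∀ (j : Fin d) (α : ℝ),
        ¬ (TriTilesProper d c1 c2 c3
              {x : EuclideanSpace ℝ (Fin d) | (∀ i, x i ∈ Set.Ioo 0 (q i)) ∧ x j < α} ∧
           TriTilesProper d c1 c2 c3
              {x : EuclideanSpace ℝ (Fin d) | (∀ i, x i ∈ Set.Ioo 0 (q i)) ∧ α < x j}) := by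
  classical
  have hp : 3 < Real.pi := Real.pi_gt_three
  have hposq : ∀ i, 0 < dims d (Real.pi + 2) (Real.pi + 2) i :=
    dims_pos (by linarith) (by linarith)
  refine ⟨dims d 1 (Real.pi + 1), dims d (Real.pi + 1) 1, dims d Real.pi Real.pi,
    dims d (Real.pi + 2) (Real.pi + 2),
    dims_pos one_pos (by linarith), dims_pos (by linarith) one_pos,
    dims_pos (by linarith) (by linarith), hposq, tiles hd, ?_⟩
  rintro j α ⟨hlo, hup⟩
  rw [lower_eq (dims d (Real.pi + 2) (Real.pi + 2)) j α] at hlo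
  rw [upper_eq (dims d (Real.pi + 2) (Real.pi + 2)) j α] at hup
  have hqle : ∀ i, dims d (Real.pi + 2) (Real.pi + 2) i ≤ Real.pi + 3 := by
    intro i; rw [dims]; split_ifs <;> linarith
  by_cases hjlo : (j : ℕ) < 2
  · -- in-plane cut
    have hj01 : j = pp0 d hd ∨ j = pp1 d hd := by
      rcases coord_cases hd j with h | h | h
      · exact Or.inl h
      · exact Or.inr h
      · omega
    by_cases hα : 0 < α
    · -- attack the lower piece
      refine attack hd (fun _ => (0 : ℝ))
        (fun i => if i = j then min (dims d (Real.pi + 2) (Real.pi + 2) j) α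
          else dims d (Real.pi + 2) (Real.pi + 2) i) ?_ ?_ ?_ hlo
      · intro i
        beta_reduce
        by_cases hij : i = j
        · subst hij; rw [if_pos rfl]; exact lt_min (hposq i) hα
        · rw [if_neg hij]; exact hposq i
      · intro i
        beta_reduce
        refine ⟨le_refl 0, ?_⟩
        by_cases hij : i = j
        · rw [if_pos hij]; exact le_trans (min_le_left _ _) (hqle j)
        · rw [if_neg hij]; exact hqle i
      · rcases hj01 with rfl | rfl
        · right
          beta_reduce
          rw [if_neg (pp_ne hd).symm, dims_p1]
          ring
        · left
          beta_reduce
          rw [if_neg (pp_ne hd), dims_p0]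
          ring
    · -- attack the upper piece
      push_neg at hα
      refine attack hd (fun i => if i = j then max 0 α else (0 : ℝ))
        (fun i => dims d (Real.pi + 2) (Real.pi + 2) i) ?_ ?_ ?_ hup
      · intro i
        beta_reduce
        by_cases hij : i = j
        · subst hij; rw [if_pos rfl, max_eq_left hα]; exact hposq i
        · rw [if_neg hij]; exact hposq i
      · intro i
        beta_reduce
        refine ⟨?_, hqle i⟩
        by_cases hij : i = j
        · rw [if_pos hij]; exact le_max_left _ _
        · rw [if_neg hij]
      · rcases hj01 with rfl | rfl
        · right
          beta_reduce
          rw [if_neg (pp_ne hd).symm, dims_p1]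
          ring
        · left
          beta_reduce
          rw [if_neg (pp_ne hd), dims_p0]
          ring
  · -- cut along a coordinate of index ≥ 2
    have hj2 : 2 ≤ (j : ℕ) := by omega
    have hqj : dims d (Real.pi + 2) (Real.pi + 2) j = 1 := dims_hi _ _ _ hj2
    have hjp0 : pp0 d hd ≠ j := by
      intro h
      have := congrArg (fun z : Fin d => (z : ℕ)) h
      simp only [pp0] at this
      omega
    have hjp1 : pp1 d hd ≠ j := by
      intro h
      have := congrArg (fun z : Fin d => (z : ℕ)) h
      simp only [pp1] at this
      omega
    by_cases hα0 : 0 < α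
    · by_cases hα1 : α < 1
      · -- thin lower piece : no brick fits
        obtain ⟨Λ1, Λ2, Λ3, hemp, H⟩ := hlo
        have hres := key1 j 1 one_ne_zero (fun _ => (0 : ℝ))
          (fun i => if i = j then min (dims d (Real.pi + 2) (Real.pi + 2) j) α
            else dims d (Real.pi + 2) (Real.pi + 2) i)
          (by
            intro i
            beta_reduce
            by_cases hij : i = j
            · subst hij; rw [if_pos rfl]; exact lt_min (hposq i) hα0
            · rw [if_neg hij]; exact hposq i)
          (by
            intro i hij
            beta_reduce
            refine ⟨le_refl 0, ?_⟩
            rw [if_neg hij]; exact hqle i)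
          _ _ _ (dims_pos one_pos (by linarith)) (dims_pos (by linarith) one_pos)
          (dims_pos (by linarith) (by linarith)) Λ1 Λ2 Λ3
          ⟨1, by rw [dims_hi _ _ _ hj2]; norm_num⟩
          ⟨1, by rw [dims_hi _ _ _ hj2]; norm_num⟩
          ⟨1, by rw [dims_hi _ _ _ hj2]; norm_num⟩ H
        obtain ⟨n, hn⟩ := hres
        beta_reduce at hn
        rw [if_pos rfl, hqj, min_eq_right hα1.le, sub_zero, mul_one] at hn
        have h0n : (0 : ℝ) < (n : ℝ) := by rw [← hn]; exact hα0
        have h1n : ((n : ℝ) : ℝ) < 1 := by rw [← hn]; exact hα1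
        have h0n' : (0 : ℤ) < n := by exact_mod_cast h0n
        have h1n' : n < (1 : ℤ) := by exact_mod_cast h1n
        omega
      · -- α ≥ 1 : the lower piece is all of Q
        push_neg at hα1
        refine attack hd (fun _ => (0 : ℝ))
          (fun i => if i = j then min (dims d (Real.pi + 2) (Real.pi + 2) j) α
            else dims d (Real.pi + 2) (Real.pi + 2) i) ?_ ?_ ?_ hlo
        · intro i
          beta_reduce
          by_cases hij : i = j
          · subst hij; rw [if_pos rfl]; exact lt_min (hposq i) hα0
          · rw [if_neg hij]; exact hposq i
        · intro i
          beta_reduce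
          refine ⟨le_refl 0, ?_⟩
          by_cases hij : i = j
          · rw [if_pos hij]; exact le_trans (min_le_left _ _) (hqle j)
          · rw [if_neg hij]; exact hqle i
        · left
          beta_reduce
          rw [if_neg hjp0, dims_p0]
          ring
    · -- α ≤ 0 : the upper piece is all of Q
      push_neg at hα0
      refine attack hd (fun i => if i = j then max 0 α else (0 : ℝ))
        (fun i => dims d (Real.pi + 2) (Real.pi + 2) i) ?_ ?_ ?_ hup
      · intro i
        beta_reduce
        by_cases hij : i = j
        · subst hij; rw [if_pos rfl, max_eq_left hα0]; exact hposq i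
        · rw [if_neg hij]; exact hposq i
      · intro i
        beta_reduce
        refine ⟨?_, hqle i⟩
        by_cases hij : i = j
        · rw [if_pos hij]; exact le_max_left _ _
        · rw [if_neg hij]
      · left
        beta_reduce
        rw [if_neg hjp0, dims_p0]
        ring
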